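/- Let n ≥ 1 and ℓ, u ≥ 0 be integers, and let 1 = r_{−ℓ} < r_{−ℓ+1} < ⋯ < r_0 < ⋯ < r_{u−1} < r_u = n be a strictly increasing sequence of integers indexed by −ℓ ≤ k ≤ u. Let N be the number of permutations π of {1,…,n} such that π_1 = r_0, the set of lower record values of π equals {r_{−ℓ}, …, r_{−1}, r_0}, and the set of upper record values of π equals {r_0, r_1, …, r_u}. Then N · ∏_{k=0}^{u−1} (n − r_k) · ∏_{k=0}^{ℓ−1} (r_{−k} − 1) = (n−1)!. -/

import Mathlib

open Finset

/-- `π j` is a lower record: it is the minimum among the first `j+1` entries. -/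
def isLowerRecord {n : ℕ} (π : Equiv.Perm (Fin n)) (j : Fin n) : Prop :=
  ∀ k, k ≤ j → π j ≤ π k

/-- `π j` is an upper record: it is the maximum among the first `j+1` entries. -/
def isUpperRecord {n : ℕ} (π : Equiv.Perm (Fin n)) (j : Fin n) : Prop :=
  ∀ k, k ≤ j → π k ≤ π j

instance {n : ℕ} (π : Equiv.Perm (Fin n)) (j : Fin n) : Decidable (isLowerRecord π j) :=
  inferInstanceAs (Decidable (∀ k, k ≤ j → π j ≤ π k))

instance {n : ℕ} (π : Equiv.Perm (Fin n)) (j : Fin n) : Decidable (isUpperRecord π j) :=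
  inferInstanceAs (Decidable (∀ k, k ≤ j → π k ≤ π j))

/-- number of proper (position ≥ 2, i.e. index ≥ 1) lower records -/
def properLowerCount {n : ℕ} (π : Equiv.Perm (Fin n)) : ℕ :=
  (univ.filter fun j : Fin n => 0 < j.val ∧ isLowerRecord π j).card

/-- number of proper (position ≥ 2, i.e. index ≥ 1) upper records -/
def properUpperCount {n : ℕ} (π : Equiv.Perm (Fin n)) : ℕ :=
  (univ.filter fun j : Fin n => 0 < j.val ∧ isUpperRecord π j).card

/-- `A n ℓ u` = number of permutations of `{1,…,n}` with exactly `ℓ` proper lower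
records and exactly `u` proper upper records. -/
def A (n ℓ u : ℕ) : ℕ :=
  (univ.filter fun π : Equiv.Perm (Fin n) =>
    properLowerCount π = ℓ ∧ properUpperCount π = u).card

/-- the set of lower record values of `π`, as 1-based values in `{1,…,n}` -/
def lowerRecValues {n : ℕ} (π : Equiv.Perm (Fin n)) : Finset ℕ :=
  (univ.filter fun j : Fin n => isLowerRecord π j).image fun j => (π j).val + 1

/-- the set of upper record values of `π`, as 1-based values in `{1,…,n}` -/
def upperRecValues {n : ℕ} (π : Equiv.Perm (Fin n)) : Finset ℕ :=
  (univ.filter fun j : Fin n => isUpperRecord π j).image fun j => (π j).val + 1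



/-- upper record values of the list that are `> c` -/
def recsHi (c : ℕ) : List ℕ → Finset ℕ
  | [] => ∅
  | x :: l => if c < x then insert x (recsHi x l) else recsHi c l

/-- lower record values of the list that are `< c` -/
def recsLo (c : ℕ) : List ℕ → Finset ℕ
  | [] => ∅
  | x :: l => if x < c then insert x (recsLo x l) else recsLo c l

/-- all orderings (as lists) of a finset of naturals -/
def ords (S : Finset ℕ) : Finset (List ℕ) :=
  if h : S = ∅ then {[]}
  else S.attach.biUnion fun x => (ords (S.erase x.1)).image (x.1 :: ·)
termination_by S.card
decreasing_by exact Finset.card_erase_lt_of_mem x.2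

lemma lt_of_mem_recsHi {c v : ℕ} {l : List ℕ} (h : v ∈ recsHi c l) : c < v := by
  induction l generalizing c with
  | nil => simp [recsHi] at h
  | cons x t ih =>
    unfold recsHi at h
    split at h
    · rcases Finset.mem_insert.1 h with rfl | h
      · assumption
      · exact lt_trans (by assumption) (ih h)
    · exact ih h

lemma lt_of_mem_recsLo {c v : ℕ} {l : List ℕ} (h : v ∈ recsLo c l) : v < c := by
  induction l generalizing c with
  | nil => simp [recsLo] at h
  | cons x t ih =>
    unfold recsLo at h
    split at h
    · rcases Finset.mem_insert.1 h with rfl | h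
      · assumption
      · exact lt_trans (ih h) (by assumption)
    · exact ih h

lemma mem_ords {S : Finset ℕ} : ∀ {l : List ℕ},
    l ∈ ords S ↔ l.toFinset = S ∧ l.Nodup := by
  induction S using Finset.strongInduction with
  | _ S ih =>
    intro l
    rw [ords]
    split
    · subst ‹S = ∅›
      constructor
      · intro h; rw [Finset.mem_singleton] at h; subst h; simp
      · intro ⟨h1, h2⟩
        cases l with
        | nil => simp
        | cons x t => simp at h1
    · rename_i hS
      simp only [Finset.mem_biUnion, Finset.mem_attach, true_and, Finset.mem_image,
        Subtype.exists]
      constructor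
      · rintro ⟨x, hx, l', hl', rfl⟩
        rw [ih _ (Finset.erase_ssubset hx)] at hl'
        obtain ⟨h1, h2⟩ := hl'
        refine ⟨?_, ?_⟩
        · simp [h1, Finset.insert_erase hx]
        · exact List.nodup_cons.2 ⟨fun hc => (Finset.notMem_erase x S) (h1 ▸ List.mem_toFinset.2 hc), h2⟩
      · rintro ⟨h1, h2⟩
        cases l with
        | nil => exact absurd h1.symm hS
        | cons x t =>
          have hx : x ∈ S := by rw [← h1]; simp
          rw [List.nodup_cons] at h2
          refine ⟨x, hx, t, ?_, rfl⟩
          rw [ih _ (Finset.erase_ssubset hx)]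
          refine ⟨?_, h2.2⟩
          rw [← h1]
          simp only [List.toFinset_cons]
          rw [Finset.erase_insert]
          simp [h2.1]

def g2 (S Blo Bhi : Finset ℕ) (clo chi : ℕ) : ℕ :=
  ((ords S).filter fun l => recsLo clo l = Blo ∧ recsHi chi l = Bhi).card

def cnt (S Blo Bhi : Finset ℕ) (clo chi x : ℕ) : ℕ :=
  ((ords (S.erase x)).filter
    (fun l => recsLo clo (x :: l) = Blo ∧ recsHi chi (x :: l) = Bhi)).card

lemma g2_sum {S : Finset ℕ} (Blo Bhi : Finset ℕ) (clo chi : ℕ) (hS : S ≠ ∅) :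
    g2 S Blo Bhi clo chi = ∑ x ∈ S, cnt S Blo Bhi clo chi x := by
  unfold g2
  rw [ords, dif_neg hS, Finset.filter_biUnion, Finset.card_biUnion, ← Finset.sum_attach S
    (cnt S Blo Bhi clo chi)]
  · apply Finset.sum_congr rfl
    intro x _
    rw [Finset.filter_image, Finset.card_image_of_injective _ (List.cons_injective)]
    rfl
  · intro a _ b _ hab
    apply Finset.disjoint_filter_filter
    rw [Finset.disjoint_left]
    rintro l hl1 hl2
    obtain ⟨l1, _, rfl⟩ := Finset.mem_image.1 hl1
    obtain ⟨l2, _, heq⟩ := Finset.mem_image.1 hl2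
    exact hab (Subtype.ext (List.head_eq_of_cons_eq heq).symm)

lemma cnt_hi {S Blo Bhi : Finset ℕ} {clo chi x : ℕ} (hx : chi < x) (hcc : clo ≤ chi) :
    cnt S Blo Bhi clo chi x =
      if x ∈ Bhi ∧ ∀ b ∈ Bhi, x ≤ b then g2 (S.erase x) Blo (Bhi.erase x) clo x else 0 := by
  have h1 : ∀ l, recsHi chi (x :: l) = insert x (recsHi x l) := fun l => by
    simp [recsHi, hx]
  have h2 : ∀ l, recsLo clo (x :: l) = recsLo clo l := fun l => by
    simp [recsLo, Nat.not_lt.2 (le_of_lt (lt_of_le_of_lt hcc hx))]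
  split
  · rename_i hcond
    unfold cnt g2
    congr 1
    apply Finset.filter_congr
    intro l _
    rw [h1, h2]
    constructor
    · rintro ⟨ha, hb⟩
      refine ⟨ha, ?_⟩
      rw [← hb, Finset.erase_insert ?_]
      intro hmem
      exact lt_irrefl x (lt_of_mem_recsHi hmem)
    · rintro ⟨ha, hb⟩
      exact ⟨ha, by rw [hb, Finset.insert_erase hcond.1]⟩
  · rename_i hcond
    unfold cnt
    rw [Finset.card_eq_zero, Finset.filter_eq_empty_iff]
    rintro l _ ⟨ha, hb⟩
    rw [h1] at hb
    apply hcond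
    constructor
    · rw [← hb]; exact Finset.mem_insert_self x _
    · intro b hbmem
      rw [← hb] at hbmem
      rcases Finset.mem_insert.1 hbmem with rfl | hmem
      · exact le_rfl
      · exact le_of_lt (lt_of_mem_recsHi hmem)

lemma cnt_lo {S Blo Bhi : Finset ℕ} {clo chi x : ℕ} (hx : x < clo) (hcc : clo ≤ chi) :
    cnt S Blo Bhi clo chi x =
      if x ∈ Blo ∧ ∀ b ∈ Blo, b ≤ x then g2 (S.erase x) (Blo.erase x) Bhi x chi else 0 := by
  have h1 : ∀ l, recsLo clo (x :: l) = insert x (recsLo x l) := fun l => by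
    simp [recsLo, hx]
  have h2 : ∀ l, recsHi chi (x :: l) = recsHi chi l := fun l => by
    simp [recsHi, Nat.not_lt.2 (le_of_lt (lt_of_lt_of_le hx hcc))]
  split
  · rename_i hcond
    unfold cnt g2
    congr 1
    apply Finset.filter_congr
    intro l _
    rw [h1, h2]
    constructor
    · rintro ⟨ha, hb⟩
      refine ⟨?_, hb⟩
      rw [← ha, Finset.erase_insert ?_]
      intro hmem
      exact lt_irrefl x (lt_of_mem_recsLo hmem)
    · rintro ⟨ha, hb⟩
      exact ⟨by rw [ha, Finset.insert_erase hcond.1], hb⟩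
  · rename_i hcond
    unfold cnt
    rw [Finset.card_eq_zero, Finset.filter_eq_empty_iff]
    rintro l _ ⟨ha, hb⟩
    rw [h1] at ha
    apply hcond
    constructor
    · rw [← ha]; exact Finset.mem_insert_self x _
    · intro b hbmem
      rw [← ha] at hbmem
      rcases Finset.mem_insert.1 hbmem with rfl | hmem
      · exact le_rfl
      · exact le_of_lt (lt_of_mem_recsLo hmem)

lemma cnt_mid {S Blo Bhi : Finset ℕ} {clo chi x : ℕ} (h1 : ¬ chi < x) (h2 : ¬ x < clo) :
    cnt S Blo Bhi clo chi x = g2 (S.erase x) Blo Bhi clo chi := by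
  unfold cnt g2
  congr 1
  apply Finset.filter_congr
  intro l _
  simp [recsHi, recsLo, h1, h2]

lemma g2_empty (clo chi : ℕ) : g2 ∅ ∅ ∅ clo chi = 1 := by
  rw [g2, ords, dif_pos rfl, Finset.filter_singleton, if_pos ⟨rfl, rfl⟩]
  rfl

lemma max'_congr {A B : Finset ℕ} (h : A = B) (hA : A.Nonempty) (hB : B.Nonempty) :
    A.max' hA = B.max' hB := by subst h; rfl

lemma min'_congr {A B : Finset ℕ} (h : A = B) (hA : A.Nonempty) (hB : B.Nonempty) :
    A.min' hA = B.min' hB := by subst h; rfl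

lemma filter_hi_erase {S : Finset ℕ} {y b : ℕ} (h : ¬ b < y) :
    ((S.erase y).filter (fun s => b < s)) = S.filter (fun s => b < s) := by
  rw [Finset.filter_erase]
  apply Finset.erase_eq_of_notMem
  simp only [Finset.mem_filter]
  tauto

lemma filter_lo_erase {S : Finset ℕ} {y b : ℕ} (h : ¬ y < b) :
    ((S.erase y).filter (fun s => s < b)) = S.filter (fun s => s < b) := by
  rw [Finset.filter_erase]
  apply Finset.erase_eq_of_notMem
  simp only [Finset.mem_filter]
  tauto

lemma main : ∀ (N : ℕ) (S Blo Bhi : Finset ℕ) (clo chi : ℕ),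
    S.card = N → clo ≤ chi →
    (∀ b ∈ Blo, b < clo) → (∀ b ∈ Bhi, chi < b) →
    Blo ⊆ S → Bhi ⊆ S →
    (∀ s ∈ S, s ≤ (insert chi Bhi).max' (Finset.insert_nonempty _ _)) →
    (∀ s ∈ S, (insert clo Blo).min' (Finset.insert_nonempty _ _) ≤ s) →
    g2 S Blo Bhi clo chi *
      (∏ b ∈ (insert chi Bhi).erase ((insert chi Bhi).max' (Finset.insert_nonempty _ _)),
        (S.filter (fun s => b < s)).card) *
      (∏ b ∈ (insert clo Blo).erase ((insert clo Blo).min' (Finset.insert_nonempty _ _)),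
        (S.filter (fun s => s < b)).card) = N.factorial := by
  intro N
  induction N using Nat.strong_induction_on with
  | _ N ih =>
    intro S Blo Bhi clo chi hcard hcc hblo hbhi hbloS hbhiS hub hlb
    rcases Nat.eq_zero_or_pos N with rfl | hN
    · have hS : S = ∅ := Finset.card_eq_zero.1 hcard
      subst hS
      have hBlo : Blo = ∅ := Finset.subset_empty.1 hbloS
      have hBhi : Bhi = ∅ := Finset.subset_empty.1 hbhiS
      subst hBlo hBhi
      rw [g2_empty]
      simp
    · have hS : S ≠ ∅ := by
        intro h; rw [h] at hcard; simp at hcard; omega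
      rw [g2_sum _ _ _ _ hS]
      rw [← Finset.sum_filter_add_sum_filter_not S (fun x => chi < x)]
      rw [← Finset.sum_filter_add_sum_filter_not (S.filter (fun x => ¬ chi < x))
        (fun x => x < clo), Finset.filter_filter, Finset.filter_filter]
      set W1 := ∏ b ∈ (insert chi Bhi).erase ((insert chi Bhi).max' (Finset.insert_nonempty _ _)),
        (S.filter (fun s => b < s)).card with hW1
      set W2 := ∏ b ∈ (insert clo Blo).erase ((insert clo Blo).min' (Finset.insert_nonempty _ _)),
        (S.filter (fun s => s < b)).card with hW2
      have hN1 : N - 1 < N := by omega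
      -- part 1 : the sum over x with chi < x
      have hA1 : (∑ x ∈ S.filter (fun x => chi < x), cnt S Blo Bhi clo chi x) * W1 * W2
          = (S.filter (fun x => chi < x)).card * (N-1).factorial := by
        by_cases hBne : Bhi.Nonempty
        · set b₁ := Bhi.min' hBne with hb₁
          have hb₁Bhi : b₁ ∈ Bhi := Bhi.min'_mem hBne
          have hb₁S : b₁ ∈ S := hbhiS hb₁Bhi
          have hb₁chi : chi < b₁ := hbhi _ hb₁Bhi
          have hMmem : (insert chi Bhi).max' (Finset.insert_nonempty _ _) ∈ Bhi := by
            rcases Finset.mem_insert.1 ((insert chi Bhi).max'_mem (Finset.insert_nonempty _ _))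
              with hsame | h
            · exfalso
              have := Finset.le_max' (insert chi Bhi) b₁ (Finset.mem_insert_of_mem hb₁Bhi)
              omega
            · exact h
          set M := (insert chi Bhi).max' (Finset.insert_nonempty _ _) with hMdef
          have hchiM : chi < M := hbhi _ hMmem
          have hsum : (∑ x ∈ S.filter (fun x => chi < x), cnt S Blo Bhi clo chi x)
              = g2 (S.erase b₁) Blo (Bhi.erase b₁) clo b₁ := by
            rw [Finset.sum_eq_single b₁]
            · rw [cnt_hi hb₁chi hcc, if_pos ⟨hb₁Bhi, fun b hb => Bhi.min'_le b hb⟩]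
            · intro x hx hne
              rw [cnt_hi (Finset.mem_filter.1 hx).2 hcc, if_neg]
              rintro ⟨hxB, hxmin⟩
              exact hne (le_antisymm (hxmin _ hb₁Bhi) (Bhi.min'_le _ hxB))
            · intro hb
              exact absurd (Finset.mem_filter.2 ⟨hb₁S, hb₁chi⟩) hb
          -- identify the product sets
          have hsetHi : insert b₁ (Bhi.erase b₁) = Bhi := Finset.insert_erase hb₁Bhi
          have hM' : (insert b₁ (Bhi.erase b₁)).max' (Finset.insert_nonempty _ _) = M := by
            rw [max'_congr hsetHi _ hBne]
            apply le_antisymm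
            · exact Finset.le_max' _ _ (Finset.mem_insert_of_mem (Bhi.max'_mem hBne))
            · exact Finset.le_max' _ _ hMmem
          have hW1' : W1 = (S.filter (fun x => chi < x)).card *
              ∏ b ∈ (insert b₁ (Bhi.erase b₁)).erase
                ((insert b₁ (Bhi.erase b₁)).max' (Finset.insert_nonempty _ _)),
                ((S.erase b₁).filter (fun s => b < s)).card := by
            have hchiB : chi ∉ Bhi := fun h => lt_irrefl chi (hbhi _ h)
            have e1 : (insert chi Bhi).erase M = insert chi (Bhi.erase M) :=
              Finset.erase_insert_of_ne (by omega)
            rw [hW1, e1, Finset.prod_insert (fun h => hchiB (Finset.mem_of_mem_erase h))]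
            congr 1
            rw [show (insert b₁ (Bhi.erase b₁)).erase
                ((insert b₁ (Bhi.erase b₁)).max' (Finset.insert_nonempty _ _))
                = Bhi.erase M by rw [hM']; congr 1]
            apply Finset.prod_congr rfl
            intro b hb
            rw [filter_hi_erase]
            exact Nat.not_lt.2 (Bhi.min'_le _ (Finset.mem_of_mem_erase hb))
          have hW2' : W2 = ∏ b ∈ (insert clo Blo).erase
              ((insert clo Blo).min' (Finset.insert_nonempty _ _)),
              ((S.erase b₁).filter (fun s => s < b)).card := by
            apply Finset.prod_congr rfl
            intro b hb
            rw [filter_lo_erase]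
            have hb' := Finset.mem_of_mem_erase hb
            rcases Finset.mem_insert.1 hb' with rfl | h
            · omega
            · have := hblo _ h; omega
          rw [hsum, hW1', hW2']
          rw [show ∀ a b c d : ℕ, a * (b * c) * d = b * (a * c * d) by intros; ring]
          congr 1
          apply ih _ hN1
          · rw [Finset.card_erase_of_mem hb₁S, hcard]
          · omega
          · exact hblo
          · intro b hb
            have := Bhi.min'_le _ (Finset.mem_of_mem_erase hb)
            have := Finset.ne_of_mem_erase hb
            omega
          · intro b hb
            apply Finset.mem_erase.2
            refine ⟨?_, hbloS hb⟩
            have := hblo _ hb; omega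
          · intro b hb
            apply Finset.mem_erase.2
            exact ⟨Finset.ne_of_mem_erase hb, hbhiS (Finset.mem_of_mem_erase hb)⟩
          · intro s hs
            rw [hM']
            exact hub s (Finset.mem_of_mem_erase hs)
          · intro s hs
            rw [min'_congr (rfl : insert clo Blo = insert clo Blo)]
            exact hlb s (Finset.mem_of_mem_erase hs)
        · have hBe : Bhi = ∅ := Finset.not_nonempty_iff_eq_empty.1 hBne
          subst hBe
          have hfe : S.filter (fun x => chi < x) = ∅ := by
            apply Finset.filter_eq_empty_iff.2
            intro x hx
            have h2 := hub x hx
            rw [max'_congr (by simp : insert chi (∅:Finset ℕ) = {chi}) _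
              (Finset.singleton_nonempty chi), Finset.max'_singleton] at h2
            omega
          rw [hfe]
          simp
      -- part 2 : the sum over x with x < clo
      have hA2 : (∑ x ∈ S.filter (fun a => ¬chi < a ∧ a < clo), cnt S Blo Bhi clo chi x) * W1 * W2
          = (S.filter (fun a => ¬chi < a ∧ a < clo)).card * (N-1).factorial := by
        have hfeq : S.filter (fun a => ¬chi < a ∧ a < clo) = S.filter (fun a => a < clo) := by
          apply Finset.filter_congr
          intro x _
          constructor
          · exact fun h => h.2
          · intro h; exact ⟨by omega, h⟩
        rw [hfeq]
        by_cases hBne : Blo.Nonempty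
        · set b₁ := Blo.max' hBne with hb₁
          have hb₁Blo : b₁ ∈ Blo := Blo.max'_mem hBne
          have hb₁S : b₁ ∈ S := hbloS hb₁Blo
          have hb₁clo : b₁ < clo := hblo _ hb₁Blo
          have hmmem : (insert clo Blo).min' (Finset.insert_nonempty _ _) ∈ Blo := by
            rcases Finset.mem_insert.1 ((insert clo Blo).min'_mem (Finset.insert_nonempty _ _))
              with hsame | h
            · exfalso
              have := Finset.min'_le (insert clo Blo) b₁ (Finset.mem_insert_of_mem hb₁Blo)
              omega
            · exact h
          set m := (insert clo Blo).min' (Finset.insert_nonempty _ _) with hmdef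
          have hmclo : m < clo := hblo _ hmmem
          have hsum : (∑ x ∈ S.filter (fun x => x < clo), cnt S Blo Bhi clo chi x)
              = g2 (S.erase b₁) (Blo.erase b₁) Bhi b₁ chi := by
            rw [Finset.sum_eq_single b₁]
            · rw [cnt_lo hb₁clo hcc, if_pos ⟨hb₁Blo, fun b hb => Blo.le_max' b hb⟩]
            · intro x hx hne
              rw [cnt_lo (Finset.mem_filter.1 hx).2 hcc, if_neg]
              rintro ⟨hxB, hxmax⟩
              exact hne (le_antisymm (Blo.le_max' _ hxB) (hxmax _ hb₁Blo))
            · intro hb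
              exact absurd (Finset.mem_filter.2 (⟨hb₁S, hb₁clo⟩ : b₁ ∈ S ∧ b₁ < clo)) hb
          have hsetLo : insert b₁ (Blo.erase b₁) = Blo := Finset.insert_erase hb₁Blo
          have hm' : (insert b₁ (Blo.erase b₁)).min' (Finset.insert_nonempty _ _) = m := by
            rw [min'_congr hsetLo _ hBne]
            apply le_antisymm
            · exact Finset.min'_le _ _ hmmem
            · exact Finset.min'_le _ _ (Finset.mem_insert_of_mem (Blo.min'_mem hBne))
          have hW2' : W2 = (S.filter (fun x => x < clo)).card *
              ∏ b ∈ (insert b₁ (Blo.erase b₁)).erase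
                ((insert b₁ (Blo.erase b₁)).min' (Finset.insert_nonempty _ _)),
                ((S.erase b₁).filter (fun s => s < b)).card := by
            have hcloB : clo ∉ Blo := fun h => lt_irrefl clo (hblo _ h)
            have e1 : (insert clo Blo).erase m = insert clo (Blo.erase m) :=
              Finset.erase_insert_of_ne (by omega)
            rw [hW2, e1, Finset.prod_insert (fun h => hcloB (Finset.mem_of_mem_erase h))]
            congr 1
            rw [show (insert b₁ (Blo.erase b₁)).erase
                ((insert b₁ (Blo.erase b₁)).min' (Finset.insert_nonempty _ _))
                = Blo.erase m by rw [hm']; congr 1]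
            apply Finset.prod_congr rfl
            intro b hb
            rw [filter_lo_erase]
            exact Nat.not_lt.2 (Blo.le_max' _ (Finset.mem_of_mem_erase hb))
          have hW1' : W1 = ∏ b ∈ (insert chi Bhi).erase
              ((insert chi Bhi).max' (Finset.insert_nonempty _ _)),
              ((S.erase b₁).filter (fun s => b < s)).card := by
            apply Finset.prod_congr rfl
            intro b hb
            rw [filter_hi_erase]
            have hb' := Finset.mem_of_mem_erase hb
            rcases Finset.mem_insert.1 hb' with rfl | h
            · omega
            · have := hbhi _ h; omega
          rw [hsum, hW1', hW2']
          rw [show ∀ a b c d : ℕ, a * b * (c * d) = c * (a * b * d) by intros; ring]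
          congr 1
          apply ih _ hN1
          · rw [Finset.card_erase_of_mem hb₁S, hcard]
          · omega
          · intro b hb
            have := Blo.le_max' _ (Finset.mem_of_mem_erase hb)
            have := Finset.ne_of_mem_erase hb
            omega
          · exact hbhi
          · intro b hb
            apply Finset.mem_erase.2
            exact ⟨Finset.ne_of_mem_erase hb, hbloS (Finset.mem_of_mem_erase hb)⟩
          · intro b hb
            apply Finset.mem_erase.2
            refine ⟨?_, hbhiS hb⟩
            have := hbhi _ hb; omega
          · intro s hs
            exact hub s (Finset.mem_of_mem_erase hs)
          · intro s hs
            rw [hm']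
            exact hlb s (Finset.mem_of_mem_erase hs)
        · have hBe : Blo = ∅ := Finset.not_nonempty_iff_eq_empty.1 hBne
          subst hBe
          have hfe : S.filter (fun x => x < clo) = ∅ := by
            apply Finset.filter_eq_empty_iff.2
            intro x hx
            have h2 := hlb x hx
            rw [min'_congr (by simp : insert clo (∅:Finset ℕ) = {clo}) _
              (Finset.singleton_nonempty clo), Finset.min'_singleton] at h2
            omega
          rw [hfe]
          simp
      -- part 3 : the middle sum
      have hA3 : (∑ x ∈ S.filter (fun a => ¬chi < a ∧ ¬a < clo), cnt S Blo Bhi clo chi x) * W1 * W2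
          = (S.filter (fun a => ¬chi < a ∧ ¬a < clo)).card * (N-1).factorial := by
        rw [Finset.sum_mul, Finset.sum_mul, Finset.card_eq_sum_ones, Finset.sum_mul]
        apply Finset.sum_congr rfl
        intro x hx
        rw [one_mul]
        obtain ⟨hxS, hx1, hx2⟩ := Finset.mem_filter.1 hx
        rw [cnt_mid hx1 hx2]
        have hW1' : W1 = ∏ b ∈ (insert chi Bhi).erase
            ((insert chi Bhi).max' (Finset.insert_nonempty _ _)),
            ((S.erase x).filter (fun s => b < s)).card := by
          apply Finset.prod_congr rfl
          intro b hb
          rw [filter_hi_erase]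
          rcases Finset.mem_insert.1 (Finset.mem_of_mem_erase hb) with rfl | h
          · omega
          · have := hbhi _ h; omega
        have hW2' : W2 = ∏ b ∈ (insert clo Blo).erase
            ((insert clo Blo).min' (Finset.insert_nonempty _ _)),
            ((S.erase x).filter (fun s => s < b)).card := by
          apply Finset.prod_congr rfl
          intro b hb
          rw [filter_lo_erase]
          rcases Finset.mem_insert.1 (Finset.mem_of_mem_erase hb) with rfl | h
          · omega
          · have := hblo _ h; omega
        rw [hW1', hW2']
        apply ih _ hN1
        · rw [Finset.card_erase_of_mem hxS, hcard]
        · exact hcc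
        · exact hblo
        · exact hbhi
        · intro b hb
          apply Finset.mem_erase.2
          refine ⟨?_, hbloS hb⟩
          have := hblo _ hb; omega
        · intro b hb
          apply Finset.mem_erase.2
          refine ⟨?_, hbhiS hb⟩
          have := hbhi _ hb; omega
        · intro s hs
          exact hub s (Finset.mem_of_mem_erase hs)
        · intro s hs
          exact hlb s (Finset.mem_of_mem_erase hs)
      -- combine
      have hpart1 := Finset.card_filter_add_card_filter_not
        (s := S) (p := fun x => chi < x)
      have hpart2 := Finset.card_filter_add_card_filter_not
        (s := S.filter (fun x => ¬ chi < x)) (p := fun x => x < clo)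
      rw [Finset.filter_filter, Finset.filter_filter] at hpart2
      have hsum3 : (S.filter (fun x => chi < x)).card +
          ((S.filter (fun a => ¬chi < a ∧ a < clo)).card +
            (S.filter (fun a => ¬chi < a ∧ ¬a < clo)).card) = N := by
        omega
      calc (∑ x ∈ S.filter (fun x => chi < x), cnt S Blo Bhi clo chi x +
              (∑ x ∈ S.filter (fun a => ¬chi < a ∧ a < clo), cnt S Blo Bhi clo chi x +
                ∑ x ∈ S.filter (fun a => ¬chi < a ∧ ¬a < clo), cnt S Blo Bhi clo chi x)) * W1 * W2
          = (∑ x ∈ S.filter (fun x => chi < x), cnt S Blo Bhi clo chi x) * W1 * W2 +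
            ((∑ x ∈ S.filter (fun a => ¬chi < a ∧ a < clo), cnt S Blo Bhi clo chi x) * W1 * W2 +
              (∑ x ∈ S.filter (fun a => ¬chi < a ∧ ¬a < clo), cnt S Blo Bhi clo chi x) * W1 * W2) := by
            ring
        _ = (S.filter (fun x => chi < x)).card * (N-1).factorial +
            ((S.filter (fun a => ¬chi < a ∧ a < clo)).card * (N-1).factorial +
              (S.filter (fun a => ¬chi < a ∧ ¬a < clo)).card * (N-1).factorial) := by
            rw [hA1, hA2, hA3]
        _ = ((S.filter (fun x => chi < x)).card +
              ((S.filter (fun a => ¬chi < a ∧ a < clo)).card +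
                (S.filter (fun a => ¬chi < a ∧ ¬a < clo)).card)) * (N-1).factorial := by ring
        _ = N * (N-1).factorial := by rw [hsum3]
        _ = N.factorial := Nat.mul_factorial_pred hN.ne'

lemma mem_recsHi {v : ℕ} : ∀ {c : ℕ} {l : List ℕ}, v ∈ recsHi c l ↔
    ∃ (i : ℕ) (h : i < l.length), l[i]'h = v ∧ c < v ∧
      ∀ (j : ℕ) (hj : j < i), l[j]'(by omega) < v := by
  intro c l
  induction l generalizing c with
  | nil => simp [recsHi]
  | cons x t ih =>
    unfold recsHi
    by_cases hcx : c < x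
    · rw [if_pos hcx, Finset.mem_insert, ih]
      constructor
      · rintro (rfl | ⟨i, h, hget, hv, hprev⟩)
        · exact ⟨0, by simp, by simp, hcx, by omega⟩
        · refine ⟨i+1, by simpa using h, by simpa using hget, by omega, ?_⟩
          intro j hj
          cases j with
          | zero => simpa using hv
          | succ j' => simpa using hprev j' (by omega)
      · rintro ⟨i, h, hget, hv, hprev⟩
        cases i with
        | zero => left; simp at hget; omega
        | succ i' =>
          right
          refine ⟨i', by simpa using h, by simpa using hget, by simpa using hprev 0 (by omega), ?_⟩
          intro j hj
          simpa using hprev (j+1) (by omega)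
    · rw [if_neg hcx, ih]
      constructor
      · rintro ⟨i, h, hget, hv, hprev⟩
        refine ⟨i+1, by simpa using h, by simpa using hget, hv, ?_⟩
        intro j hj
        cases j with
        | zero => simp; omega
        | succ j' => simpa using hprev j' (by omega)
      · rintro ⟨i, h, hget, hv, hprev⟩
        cases i with
        | zero => simp at hget; omega
        | succ i' =>
          refine ⟨i', by simpa using h, by simpa using hget, hv, ?_⟩
          intro j hj
          simpa using hprev (j+1) (by omega)

lemma mem_recsLo {v : ℕ} : ∀ {c : ℕ} {l : List ℕ}, v ∈ recsLo c l ↔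
    ∃ (i : ℕ) (h : i < l.length), l[i]'h = v ∧ v < c ∧
      ∀ (j : ℕ) (hj : j < i), v < l[j]'(by omega) := by
  intro c l
  induction l generalizing c with
  | nil => simp [recsLo]
  | cons x t ih =>
    unfold recsLo
    by_cases hcx : x < c
    · rw [if_pos hcx, Finset.mem_insert, ih]
      constructor
      · rintro (rfl | ⟨i, h, hget, hv, hprev⟩)
        · exact ⟨0, by simp, by simp, hcx, by omega⟩
        · refine ⟨i+1, by simpa using h, by simpa using hget, by omega, ?_⟩
          intro j hj
          cases j with
          | zero => simpa using hv
          | succ j' => simpa using hprev j' (by omega)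
      · rintro ⟨i, h, hget, hv, hprev⟩
        cases i with
        | zero => left; simp at hget; omega
        | succ i' =>
          right
          refine ⟨i', by simpa using h, by simpa using hget, by simpa using hprev 0 (by omega), ?_⟩
          intro j hj
          simpa using hprev (j+1) (by omega)
    · rw [if_neg hcx, ih]
      constructor
      · rintro ⟨i, h, hget, hv, hprev⟩
        refine ⟨i+1, by simpa using h, by simpa using hget, hv, ?_⟩
        intro j hj
        cases j with
        | zero => simp; omega
        | succ j' => simpa using hprev j' (by omega)
      · rintro ⟨i, h, hget, hv, hprev⟩
        cases i with
        | zero => simp at hget; omega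
        | succ i' =>
          refine ⟨i', by simpa using h, by simpa using hget, hv, ?_⟩
          intro j hj
          simpa using hprev (j+1) (by omega)

/-- the tail word of a permutation, as 1-based values -/
def tl {n : ℕ} (π : Equiv.Perm (Fin n)) : List ℕ :=
  List.ofFn (fun i : Fin (n-1) => (π ⟨i.val + 1, by omega⟩).val + 1)

lemma tl_length {n : ℕ} (π : Equiv.Perm (Fin n)) : (tl π).length = n - 1 := by
  simp [tl]

lemma tl_get' {n : ℕ} (π : Equiv.Perm (Fin n)) {i : ℕ} (h : i < (tl π).length)
    (j : Fin n) (hj : j.val = i + 1) :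
    (tl π)[i]'h = (π j).val + 1 := by
  simp only [tl, List.getElem_ofFn]
  congr 1
  exact congrArg (fun t => (π t).val) (Fin.ext (by simp; omega))

lemma val_lt_val {n : ℕ} (π : Equiv.Perm (Fin n)) (a b : Fin n) (hne : a ≠ b)
    (hle : π a ≤ π b) : (π a).val < (π b).val :=
  Fin.lt_def.1 (lt_of_le_of_ne hle (fun h => hne (π.injective h)))

lemma upperRec_eq {n : ℕ} (hn : 0 < n) (π : Equiv.Perm (Fin n)) :
    upperRecValues π = insert ((π ⟨0, hn⟩).val + 1) (recsHi ((π ⟨0, hn⟩).val + 1) (tl π)) := by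
  ext v
  simp only [upperRecValues, Finset.mem_image, Finset.mem_filter, Finset.mem_univ, true_and,
    Finset.mem_insert, mem_recsHi]
  constructor
  · rintro ⟨j, hrec, rfl⟩
    rcases Nat.eq_zero_or_pos j.val with hj0 | hjpos
    · left
      rw [show j = ⟨0, hn⟩ from Fin.ext hj0]
    · right
      have hjn : j.val - 1 < (tl π).length := by rw [tl_length]; omega
      refine ⟨j.val - 1, hjn, ?_, ?_, ?_⟩
      · exact tl_get' π hjn j (by omega)
      · have hne : (⟨0, hn⟩ : Fin n) ≠ j := fun h => by
          rw [Fin.ext_iff] at h; simp at h; omega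
        have := val_lt_val π _ _ hne (hrec ⟨0, hn⟩ (by simp [Fin.le_def]))
        omega
      · intro j' hj'
        set k : Fin n := ⟨j' + 1, by omega⟩ with hkdef
        rw [tl_get' π (by omega) k rfl]
        have hne : k ≠ j := fun h => by
          rw [Fin.ext_iff] at h; simp [hkdef] at h; omega
        have := val_lt_val π _ _ hne (hrec k (by simp [Fin.le_def, hkdef]; omega))
        omega
  · rintro (hv | ⟨i, h, hget, hv, hprev⟩)
    · refine ⟨⟨0, hn⟩, ?_, hv.symm⟩
      intro k hk
      rw [show k = ⟨0, hn⟩ from Fin.ext (by rw [Fin.le_def] at hk; simp at hk ⊢; omega)]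
    · have hilen : i < n - 1 := by rwa [tl_length] at h
      set j : Fin n := ⟨i + 1, by omega⟩ with hjdef
      rw [tl_get' π h j rfl] at hget
      refine ⟨j, ?_, hget⟩
      intro k hk
      rw [Fin.le_def] at hk
      simp only [hjdef] at hk
      rw [Fin.le_def]
      rcases Nat.eq_zero_or_pos k.val with hk0 | hkpos
      · rw [show k = ⟨0, hn⟩ from Fin.ext hk0]
        omega
      · rcases Nat.lt_or_ge k.val (i + 1) with hki | hki
        · have hkl : k.val - 1 < i := by omega
          have := hprev (k.val - 1) hkl
          rw [tl_get' π (by omega) k (by omega)] at this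
          omega
        · rw [show k = j from Fin.ext (by simp [hjdef]; omega)]

lemma lowerRec_eq {n : ℕ} (hn : 0 < n) (π : Equiv.Perm (Fin n)) :
    lowerRecValues π = insert ((π ⟨0, hn⟩).val + 1) (recsLo ((π ⟨0, hn⟩).val + 1) (tl π)) := by
  ext v
  simp only [lowerRecValues, Finset.mem_image, Finset.mem_filter, Finset.mem_univ, true_and,
    Finset.mem_insert, mem_recsLo]
  constructor
  · rintro ⟨j, hrec, rfl⟩
    rcases Nat.eq_zero_or_pos j.val with hj0 | hjpos
    · left
      rw [show j = ⟨0, hn⟩ from Fin.ext hj0]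
    · right
      have hjn : j.val - 1 < (tl π).length := by rw [tl_length]; omega
      refine ⟨j.val - 1, hjn, ?_, ?_, ?_⟩
      · exact tl_get' π hjn j (by omega)
      · have hne : j ≠ ⟨0, hn⟩ := fun h => by
          rw [Fin.ext_iff] at h; simp at h; omega
        have := val_lt_val π _ _ hne (hrec ⟨0, hn⟩ (by simp [Fin.le_def]))
        omega
      · intro j' hj'
        set k : Fin n := ⟨j' + 1, by omega⟩ with hkdef
        rw [tl_get' π (by omega) k rfl]
        have hne : j ≠ k := fun h => by
          rw [Fin.ext_iff] at h; simp [hkdef] at h; omega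
        have := val_lt_val π _ _ hne (hrec k (by simp [Fin.le_def, hkdef]; omega))
        omega
  · rintro (hv | ⟨i, h, hget, hv, hprev⟩)
    · refine ⟨⟨0, hn⟩, ?_, hv.symm⟩
      intro k hk
      rw [show k = ⟨0, hn⟩ from Fin.ext (by rw [Fin.le_def] at hk; simp at hk ⊢; omega)]
    · have hilen : i < n - 1 := by rwa [tl_length] at h
      set j : Fin n := ⟨i + 1, by omega⟩ with hjdef
      rw [tl_get' π h j rfl] at hget
      refine ⟨j, ?_, hget⟩
      intro k hk
      rw [Fin.le_def] at hk
      simp only [hjdef] at hk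
      rw [Fin.le_def]
      rcases Nat.eq_zero_or_pos k.val with hk0 | hkpos
      · rw [show k = ⟨0, hn⟩ from Fin.ext hk0]
        omega
      · rcases Nat.lt_or_ge k.val (i + 1) with hki | hki
        · have hkl : k.val - 1 < i := by omega
          have := hprev (k.val - 1) hkl
          rw [tl_get' π (by omega) k (by omega)] at this
          omega
        · rw [show k = j from Fin.ext (by simp [hjdef]; omega)]

lemma insert_left_cancel {c : ℕ} {A B : Finset ℕ} (hA : c ∉ A) (hB : c ∉ B)
    (h : insert c A = insert c B) : A = B := by
  rw [← Finset.erase_insert hA, ← Finset.erase_insert hB, h]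

lemma card_perm_eq (n : ℕ) (hn : 0 < n) (c : ℕ) (hc1 : 1 ≤ c) (hcn : c ≤ n)
    (Blo Bhi : Finset ℕ) (hblo : ∀ b ∈ Blo, b < c) (hbhi : ∀ b ∈ Bhi, c < b) :
    (univ.filter fun π : Equiv.Perm (Fin n) =>
        (π ⟨0, hn⟩).val + 1 = c ∧
        lowerRecValues π = insert c Blo ∧
        upperRecValues π = insert c Bhi).card
    = ((ords ((Finset.Icc 1 n).erase c)).filter
        (fun l => recsLo c l = Blo ∧ recsHi c l = Bhi)).card := by
  have hcBlo : c ∉ Blo := fun h => lt_irrefl c (hblo _ h)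
  have hcBhi : c ∉ Bhi := fun h => lt_irrefl c (hbhi _ h)
  apply Finset.card_bij (fun π _ => tl π)
  · -- well-defined
    intro π hπ
    obtain ⟨h0, hL, hU⟩ := (Finset.mem_filter.1 hπ).2
    rw [Finset.mem_filter]
    have hLo : recsLo c (tl π) = Blo := by
      apply insert_left_cancel (fun h => lt_irrefl c (lt_of_mem_recsLo h)) hcBlo
      rw [← hL, lowerRec_eq hn π, h0]
    have hHi : recsHi c (tl π) = Bhi := by
      apply insert_left_cancel (fun h => lt_irrefl c (lt_of_mem_recsHi h)) hcBhi
      rw [← hU, upperRec_eq hn π, h0]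
    refine ⟨mem_ords.2 ⟨?_, ?_⟩, hLo, hHi⟩
    · ext v
      simp only [List.mem_toFinset, tl, List.mem_ofFn, Set.mem_range, Finset.mem_erase,
        Finset.mem_Icc]
      constructor
      · rintro ⟨i, hi⟩
        have hii := i.isLt
        have hpf : i.val + 1 < n := by omega
        have hi' : (π ⟨i.val + 1, hpf⟩).val + 1 = v := hi
        have hb := (π ⟨i.val + 1, hpf⟩).isLt
        refine ⟨?_, by omega, by omega⟩
        intro hvc
        have hk0 : π ⟨i.val + 1, hpf⟩ = π ⟨0, hn⟩ := Fin.ext (by omega)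
        have h2 := π.injective hk0
        rw [Fin.ext_iff] at h2
        simp at h2
      · rintro ⟨hvc, hv1, hvn⟩
        set j : Fin n := π.symm ⟨v - 1, by omega⟩ with hjdef
        have hπj : π j = ⟨v - 1, by omega⟩ := π.apply_symm_apply _
        have hjlt := j.isLt
        have hj0 : j.val ≠ 0 := by
          intro h0'
          have hje : j = ⟨0, hn⟩ := Fin.ext h0'
          rw [hje] at hπj
          have := congrArg Fin.val hπj
          simp at this
          omega
        refine ⟨⟨j.val - 1, by omega⟩, ?_⟩
        simp only
        have hje : (⟨(⟨j.val - 1, by omega⟩ : Fin (n-1)).val + 1, by simp; omega⟩ : Fin n) = j :=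
          Fin.ext (by simp; omega)
        rw [show ∀ (h : (⟨j.val - 1, by omega⟩ : Fin (n-1)).val + 1 < n),
            (⟨(⟨j.val - 1, by omega⟩ : Fin (n-1)).val + 1, h⟩ : Fin n) = j
          from fun h => Fin.ext (by simp; omega), hπj]
        simp
        omega
    · rw [tl, List.nodup_ofFn]
      intro a b hab
      have hpa : a.val + 1 < n := by have := a.isLt; omega
      have hpb : b.val + 1 < n := by have := b.isLt; omega
      have hab' : (π ⟨a.val + 1, hpa⟩).val + 1 = (π ⟨b.val + 1, hpb⟩).val + 1 := hab
      have h2 : π ⟨a.val + 1, hpa⟩ = π ⟨b.val + 1, hpb⟩ := Fin.ext (by omega)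
      have h3 := π.injective h2
      rw [Fin.ext_iff] at h3
      simp at h3
      exact Fin.ext h3
  · -- injective
    intro π hπ π' hπ' heq
    obtain ⟨h0, -, -⟩ := (Finset.mem_filter.1 hπ).2
    obtain ⟨h0', -, -⟩ := (Finset.mem_filter.1 hπ').2
    apply Equiv.ext
    intro k
    rcases Nat.eq_zero_or_pos k.val with hk0 | hkpos
    · rw [show k = ⟨0, hn⟩ from Fin.ext hk0]
      exact Fin.ext (by omega)
    · have hkn : k.val - 1 < (tl π).length := by rw [tl_length]; have := k.isLt; omega
      have hkn' : k.val - 1 < (tl π').length := by rw [tl_length]; have := k.isLt; omega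
      have e1 := tl_get' π hkn k (by omega)
      have e2 := tl_get' π' hkn' k (by omega)
      have q1 : (tl π)[k.val - 1]? = some ((π k).val + 1) := by
        rw [List.getElem?_eq_getElem hkn, e1]
      have q2 : (tl π')[k.val - 1]? = some ((π' k).val + 1) := by
        rw [List.getElem?_eq_getElem hkn', e2]
      rw [heq, q2] at q1
      have := Option.some.inj q1
      exact Fin.ext (by omega)
  · -- surjective
    intro l hl
    have hords := (Finset.mem_filter.1 hl).1
    have hLo := (Finset.mem_filter.1 hl).2.1
    have hHi := (Finset.mem_filter.1 hl).2.2
    obtain ⟨htoF, hnodup⟩ := mem_ords.1 hords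
    have hcIcc : c ∈ Finset.Icc 1 n := Finset.mem_Icc.2 ⟨hc1, hcn⟩
    have hlen : l.length = n - 1 := by
      have h1 : l.toFinset.card = l.length := List.toFinset_card_of_nodup hnodup
      have h2 : ((Finset.Icc 1 n).erase c).card = n - 1 := by
        rw [Finset.card_erase_of_mem hcIcc, Nat.card_Icc]
        omega
      rw [htoF] at h1
      omega
    have hmem : ∀ (i : ℕ) (h : i < l.length), 1 ≤ l[i]'h ∧ l[i]'h ≤ n ∧ l[i]'h ≠ c := by
      intro i h
      have : l[i]'h ∈ l.toFinset := List.mem_toFinset.2 (List.getElem_mem h)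
      rw [htoF, Finset.mem_erase, Finset.mem_Icc] at this
      exact ⟨this.2.1, this.2.2, this.1⟩
    have hmemD : ∀ (i : ℕ), i < l.length →
        1 ≤ l.getD i 0 ∧ l.getD i 0 ≤ n ∧ l.getD i 0 ≠ c := by
      intro i h
      rw [List.getD_eq_getElem l 0 h]
      exact hmem i h
    have hbound : ∀ k : Fin n, (if k.val = 0 then c else l.getD (k.val - 1) 0) - 1 < n := by
      intro k
      by_cases hk : k.val = 0
      · rw [if_pos hk]; omega
      · rw [if_neg hk]
        have hik : k.val - 1 < l.length := by have := k.isLt; omega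
        have := hmemD _ hik
        omega
    set f : Fin n → Fin n :=
      fun k => ⟨(if k.val = 0 then c else l.getD (k.val - 1) 0) - 1, hbound k⟩ with hfdef
    have hinj : Function.Injective f := by
      intro a b hab
      rw [hfdef] at hab
      have hv := congrArg Fin.val hab
      simp only at hv
      by_cases ha : a.val = 0 <;> by_cases hb : b.val = 0
      · exact Fin.ext (by omega)
      · rw [if_pos ha, if_neg hb] at hv
        have hik : b.val - 1 < l.length := by have := b.isLt; omega
        have := hmemD _ hik
        omega
      · rw [if_neg ha, if_pos hb] at hv
        have hik : a.val - 1 < l.length := by have := a.isLt; omega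
        have := hmemD _ hik
        omega
      · rw [if_neg ha, if_neg hb] at hv
        have hika : a.val - 1 < l.length := by have := a.isLt; omega
        have hikb : b.val - 1 < l.length := by have := b.isLt; omega
        have h1 := hmemD _ hika
        have h2 := hmemD _ hikb
        have hgd : l.getD (a.val - 1) 0 = l.getD (b.val - 1) 0 := by omega
        rw [List.getD_eq_getElem l 0 hika, List.getD_eq_getElem l 0 hikb] at hgd
        have := (List.Nodup.getElem_inj_iff hnodup).1 hgd
        exact Fin.ext (by omega)
    set π : Equiv.Perm (Fin n) := Equiv.ofBijective f
      ((Fintype.bijective_iff_injective_and_card f).2 ⟨hinj, rfl⟩) with hπdef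
    have hπapp : ∀ k, π k = f k := fun k => rfl
    have hfv0 : (f ⟨0, hn⟩).val = c - 1 := by simp [hfdef]
    have hπ0 : (π ⟨0, hn⟩).val + 1 = c := by
      rw [hπapp, hfv0]
      omega
    have htl : tl π = l := by
      apply List.ext_getElem (by rw [tl_length]; omega)
      intro i h1 h2
      have hi : i < n - 1 := by rwa [tl_length] at h1
      have hpf : i + 1 < n := by omega
      rw [tl_get' π h1 ⟨i + 1, hpf⟩ rfl, hπapp]
      have hfv : (f ⟨i + 1, hpf⟩).val = l.getD i 0 - 1 := by simp [hfdef]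
      rw [hfv, List.getD_eq_getElem l 0 h2]
      have := hmem i h2
      omega
    refine ⟨π, ?_, htl⟩
    rw [Finset.mem_filter]
    refine ⟨Finset.mem_univ _, hπ0, ?_, ?_⟩
    · rw [lowerRec_eq hn π, hπ0, htl, hLo]
    · rw [upperRec_eq hn π, hπ0, htl, hHi]

/-- if `N` is the number of permutations of `{1,…,n}` with center `r 0`,
lower record values `{r_{−ℓ},…,r_0}` and upper record values `{r_0,…,r_u}`, then
`N ⬝ ∏_{k=0}^{u−1} (n − r_k) ⬝ ∏_{k=0}^{ℓ−1} (r_{−k} − 1) = (n−1)!`. -/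
theorem stmt_5 (n : ℕ) (hn : 0 < n) (ℓ u : ℕ) (r : ℤ → ℕ)
    (hmono : StrictMonoOn r (Set.Icc (-(ℓ : ℤ)) (u : ℤ)))
    (hfirst : r (-(ℓ : ℤ)) = 1) (hlast : r (u : ℤ) = n) :
    (univ.filter fun π : Equiv.Perm (Fin n) =>
        (π ⟨0, hn⟩).val + 1 = r 0 ∧
        lowerRecValues π = (Finset.Icc (-(ℓ : ℤ)) 0).image r ∧
        upperRecValues π = (Finset.Icc (0 : ℤ) (u : ℤ)).image r).card
      * (∏ k ∈ Finset.range u, (n - r (k : ℤ)))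
      * (∏ k ∈ Finset.range ℓ, (r (-(k : ℤ)) - 1))
      = Nat.factorial (n - 1) := by

  -- abbreviations
  set c := r 0 with hcdef
  have hmemIcc : ∀ k : ℤ, -(ℓ:ℤ) ≤ k → k ≤ (u:ℤ) → k ∈ Set.Icc (-(ℓ:ℤ)) (u:ℤ) :=
    fun k h1 h2 => Set.mem_Icc.2 ⟨h1, h2⟩
  have hlt : ∀ k1 k2 : ℤ, -(ℓ:ℤ) ≤ k1 → k1 < k2 → k2 ≤ (u:ℤ) → r k1 < r k2 :=
    fun k1 k2 h1 h2 h3 => hmono (hmemIcc k1 h1 (by omega)) (hmemIcc k2 (by omega) h3) h2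
  have hle : ∀ k1 k2 : ℤ, -(ℓ:ℤ) ≤ k1 → k1 ≤ k2 → k2 ≤ (u:ℤ) → r k1 ≤ r k2 := by
    intro k1 k2 h1 h2 h3
    rcases eq_or_lt_of_le h2 with rfl | h
    · exact le_refl _
    · exact le_of_lt (hlt k1 k2 h1 h h3)
  have hrb : ∀ k : ℤ, -(ℓ:ℤ) ≤ k → k ≤ (u:ℤ) → 1 ≤ r k ∧ r k ≤ n := by
    intro k h1 h2
    constructor
    · rw [← hfirst]; exact hle _ _ (le_refl _) h1 h2
    · rw [← hlast]; exact hle _ _ h1 h2 (le_refl _)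
  have hc1 : 1 ≤ c := (hrb 0 (by omega) (by omega)).1
  have hcn : c ≤ n := (hrb 0 (by omega) (by omega)).2
  set S : Finset ℕ := (Finset.Icc 1 n).erase c with hSdef
  set Blo : Finset ℕ := (Finset.Icc (-(ℓ:ℤ)) (-1)).image r with hBlodef
  set Bhi : Finset ℕ := (Finset.Icc (1:ℤ) (u:ℤ)).image r with hBhidef
  have hblo : ∀ b ∈ Blo, b < c := by
    intro b hb
    rw [hBlodef, Finset.mem_image] at hb
    obtain ⟨k, hk, rfl⟩ := hb
    rw [Finset.mem_Icc] at hk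
    exact hlt k 0 hk.1 (by omega) (by omega)
  have hbhi : ∀ b ∈ Bhi, c < b := by
    intro b hb
    rw [hBhidef, Finset.mem_image] at hb
    obtain ⟨k, hk, rfl⟩ := hb
    rw [Finset.mem_Icc] at hk
    exact hlt 0 k (by omega) (by omega) hk.2
  -- rewrite the record-value sets as inserts
  have heqL : (Finset.Icc (-(ℓ:ℤ)) 0).image r = insert c Blo := by
    rw [hBlodef, ← Finset.image_insert]
    congr 1
    ext k
    simp only [Finset.mem_insert, Finset.mem_Icc]
    omega
  have heqU : (Finset.Icc (0:ℤ) (u:ℤ)).image r = insert c Bhi := by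
    rw [hBhidef, ← Finset.image_insert]
    congr 1
    ext k
    simp only [Finset.mem_insert, Finset.mem_Icc]
    omega
  rw [heqL, heqU, card_perm_eq n hn c hc1 hcn Blo Bhi hblo hbhi]
  -- apply the main counting lemma
  have hbloS : Blo ⊆ S := by
    intro b hb
    have hblt := hblo b hb
    rw [hBlodef, Finset.mem_image] at hb
    obtain ⟨k, hk, rfl⟩ := hb
    rw [Finset.mem_Icc] at hk
    have := hrb k hk.1 (by omega)
    rw [hSdef, Finset.mem_erase, Finset.mem_Icc]
    exact ⟨by omega, this.1, this.2⟩
  have hbhiS : Bhi ⊆ S := by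
    intro b hb
    have hblt := hbhi b hb
    rw [hBhidef, Finset.mem_image] at hb
    obtain ⟨k, hk, rfl⟩ := hb
    rw [Finset.mem_Icc] at hk
    have := hrb k (by omega) hk.2
    rw [hSdef, Finset.mem_erase, Finset.mem_Icc]
    exact ⟨by omega, this.1, this.2⟩
  have hcard : S.card = n - 1 := by
    rw [hSdef, Finset.card_erase_of_mem (Finset.mem_Icc.2 ⟨hc1, hcn⟩), Nat.card_Icc]
    omega
  have hM : (insert c Bhi).max' (Finset.insert_nonempty _ _) = n := by
    apply le_antisymm
    · apply Finset.max'_le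
      intro y hy
      rcases Finset.mem_insert.1 hy with rfl | hy'
      · exact hcn
      · rw [hBhidef, Finset.mem_image] at hy'
        obtain ⟨k, hk, rfl⟩ := hy'
        rw [Finset.mem_Icc] at hk
        exact (hrb k (by omega) hk.2).2
    · apply Finset.le_max'
      rcases Nat.eq_zero_or_pos u with hu0 | hupos
      · have hcu : c = n := by
          rw [hcdef, show (0:ℤ) = (u:ℤ) by omega, hlast]
        rw [← hcu]
        exact Finset.mem_insert_self _ _
      · apply Finset.mem_insert_of_mem
        rw [hBhidef, Finset.mem_image]
        exact ⟨(u:ℤ), Finset.mem_Icc.2 ⟨by exact_mod_cast hupos, le_refl _⟩, hlast⟩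
  have hm : (insert c Blo).min' (Finset.insert_nonempty _ _) = 1 := by
    apply le_antisymm
    · apply Finset.min'_le
      rcases Nat.eq_zero_or_pos ℓ with hl0 | hlpos
      · have hcu : c = 1 := by
          rw [hcdef, show (0:ℤ) = -(ℓ:ℤ) by omega, hfirst]
        rw [← hcu]
        exact Finset.mem_insert_self _ _
      · apply Finset.mem_insert_of_mem
        rw [hBlodef, Finset.mem_image]
        exact ⟨-(ℓ:ℤ), Finset.mem_Icc.2 ⟨le_refl _, by omega⟩, hfirst⟩
    · apply Finset.le_min'
      intro y hy
      rcases Finset.mem_insert.1 hy with rfl | hy'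
      · exact hc1
      · rw [hBlodef, Finset.mem_image] at hy'
        obtain ⟨k, hk, rfl⟩ := hy'
        rw [Finset.mem_Icc] at hk
        exact (hrb k hk.1 (by omega)).1
  have hub : ∀ s ∈ S, s ≤ (insert c Bhi).max' (Finset.insert_nonempty _ _) := by
    intro s hs
    rw [hM]
    rw [hSdef, Finset.mem_erase, Finset.mem_Icc] at hs
    exact hs.2.2
  have hlb : ∀ s ∈ S, (insert c Blo).min' (Finset.insert_nonempty _ _) ≤ s := by
    intro s hs
    rw [hm]
    rw [hSdef, Finset.mem_erase, Finset.mem_Icc] at hs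
    exact hs.2.1
  have hmain := main (n-1) S Blo Bhi c c hcard (le_refl c) hblo hbhi hbloS hbhiS hub hlb
  -- identify the upper product
  have hW1 : (∏ b ∈ (insert c Bhi).erase ((insert c Bhi).max' (Finset.insert_nonempty _ _)),
      (S.filter (fun s => b < s)).card) = ∏ k ∈ Finset.range u, (n - r (k:ℤ)) := by
    rw [hM]
    have hset : (insert c Bhi).erase n = (Finset.Icc (0:ℤ) ((u:ℤ)-1)).image r := by
      rw [← heqU]
      ext v
      simp only [Finset.mem_erase, Finset.mem_image, Finset.mem_Icc]
      constructor
      · rintro ⟨hvn, k, hk, rfl⟩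
        refine ⟨k, ⟨hk.1, ?_⟩, rfl⟩
        rcases eq_or_lt_of_le hk.2 with rfl | h
        · exact absurd hlast hvn
        · omega
      · rintro ⟨k, hk, rfl⟩
        have hltu := hlt k (u:ℤ) (by omega) (by omega) (le_refl _)
        exact ⟨by omega, k, ⟨hk.1, by omega⟩, rfl⟩
    rw [hset, Finset.prod_image (fun x hx y hy hxy => ?inj)]
    case inj =>
      by_contra hne
      rw [Finset.mem_coe, Finset.mem_Icc] at hx hy
      rcases lt_or_gt_of_ne hne with h | h
      · have := hlt x y (by omega) h (by omega); omega
      · have := hlt y x (by omega) h (by omega); omega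
    have hIcc : Finset.Icc (0:ℤ) ((u:ℤ)-1) = (Finset.range u).image (fun k : ℕ => (k:ℤ)) := by
      ext x
      simp only [Finset.mem_Icc, Finset.mem_image, Finset.mem_range]
      constructor
      · rintro ⟨h0, h1⟩
        exact ⟨x.toNat, by omega, by omega⟩
      · rintro ⟨k, hk, rfl⟩
        omega
    rw [hIcc, Finset.prod_image (fun x _ y _ hxy => by exact_mod_cast hxy)]
    apply Finset.prod_congr rfl
    intro k hk
    rw [Finset.mem_range] at hk
    have hrk1 : 1 ≤ r (k:ℤ) := (hrb _ (by omega) (by exact_mod_cast le_of_lt hk)).1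
    have hrkn : r (k:ℤ) ≤ n := (hrb _ (by omega) (by exact_mod_cast le_of_lt hk)).2
    have hck : c ≤ r (k:ℤ) := hle 0 (k:ℤ) (by omega) (by exact_mod_cast Nat.zero_le k) (by exact_mod_cast le_of_lt hk)
    rw [hSdef, Finset.filter_erase, Finset.erase_eq_of_notMem (by
      rw [Finset.mem_filter]
      rintro ⟨-, h⟩
      omega)]
    rw [show (Finset.Icc 1 n).filter (fun s => r (k:ℤ) < s) = Finset.Icc (r (k:ℤ) + 1) n by
      ext s
      simp only [Finset.mem_filter, Finset.mem_Icc]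
      omega]
    rw [Nat.card_Icc]
    omega
  -- identify the lower product
  have hW2 : (∏ b ∈ (insert c Blo).erase ((insert c Blo).min' (Finset.insert_nonempty _ _)),
      (S.filter (fun s => s < b)).card) = ∏ k ∈ Finset.range ℓ, (r (-(k:ℤ)) - 1) := by
    rw [hm]
    have hset : (insert c Blo).erase 1 = (Finset.Icc (-(ℓ:ℤ)+1) 0).image r := by
      rw [← heqL]
      ext v
      simp only [Finset.mem_erase, Finset.mem_image, Finset.mem_Icc]
      constructor
      · rintro ⟨hvn, k, hk, rfl⟩
        refine ⟨k, ⟨?_, hk.2⟩, rfl⟩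
        rcases eq_or_lt_of_le hk.1 with heqk | h
        · exact absurd (heqk ▸ hfirst) hvn
        · omega
      · rintro ⟨k, hk, rfl⟩
        have hltu := hlt (-(ℓ:ℤ)) k (le_refl _) (by omega) (by omega)
        exact ⟨by omega, k, ⟨by omega, hk.2⟩, rfl⟩
    rw [hset, Finset.prod_image (fun x hx y hy hxy => ?inj2)]
    case inj2 =>
      by_contra hne
      rw [Finset.mem_coe, Finset.mem_Icc] at hx hy
      rcases lt_or_gt_of_ne hne with h | h
      · have := hlt x y (by omega) h (by omega); omega
      · have := hlt y x (by omega) h (by omega); omega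
    have hIcc : Finset.Icc (-(ℓ:ℤ)+1) 0 = (Finset.range ℓ).image (fun k : ℕ => -(k:ℤ)) := by
      ext x
      simp only [Finset.mem_Icc, Finset.mem_image, Finset.mem_range]
      constructor
      · rintro ⟨h0, h1⟩
        exact ⟨(-x).toNat, by omega, by omega⟩
      · rintro ⟨k, hk, rfl⟩
        omega
    rw [hIcc, Finset.prod_image (fun x _ y _ hxy => by omega)]
    apply Finset.prod_congr rfl
    intro k hk
    rw [Finset.mem_range] at hk
    have hkl : -(ℓ:ℤ) ≤ -(k:ℤ) := by omega
    have hrk1 : 1 ≤ r (-(k:ℤ)) := (hrb _ hkl (by omega)).1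
    have hrkn : r (-(k:ℤ)) ≤ n := (hrb _ hkl (by omega)).2
    have hck : r (-(k:ℤ)) ≤ c := hle (-(k:ℤ)) 0 hkl (by omega) (by omega)
    rw [hSdef, Finset.filter_erase, Finset.erase_eq_of_notMem (by
      rw [Finset.mem_filter]
      rintro ⟨-, h⟩
      omega)]
    rw [show (Finset.Icc 1 n).filter (fun s => s < r (-(k:ℤ))) = Finset.Icc 1 (r (-(k:ℤ)) - 1) by
      ext s
      simp only [Finset.mem_filter, Finset.mem_Icc]
      omega]
    rw [Nat.card_Icc]
    omega
  rw [← hW1, ← hW2]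
  exact hmain
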